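/- Let d ≥ 3 and let h, h' ∈ ℝ^d define tropical hyperplanes H(h), H(h') in ℝ^d. Then there exists a K-linear subspace L ⊆ K^d with dim_K L = d−2 such that the set {(val ℓ_1, …, val ℓ_d) : ℓ ∈ L with every coordinate ℓ_j ≠ 0} equals the set of points of ℝ^d lying in the stable intersection of H(h) and H(h'). -/

import Mathlib

noncomputable section

/-- The field of generalized power series over `ℂ` with real exponents and
well-ordered support. -/
abbrev K : Type := HahnSeries ℝ ℂ

/-- The type of `w` with respect to `h`: the set of indices at which the minimum of
`h i + w i` is attained. -/
def typeSet {d : ℕ} (h w : Fin d → ℝ) : Set (Fin d) :=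
  {i | ∀ j, h i + w i ≤ h j + w j}

/-- `w` lies on the tropical hyperplane defined by `h`: the minimum of `h i + w i`
is attained at least twice. -/
def MemTropHyp {d : ℕ} (h w : Fin d → ℝ) : Prop :=
  ∃ i j : Fin d, i ≠ j ∧ i ∈ typeSet h w ∧ j ∈ typeSet h w

/-- `w` lies in the stable intersection of the tropical hyperplanes defined by `h` and `h'`. -/
def StableMem {d : ℕ} (h h' w : Fin d → ℝ) : Prop :=
  ∀ ε > (0 : ℝ), ∃ δ > (0 : ℝ), ∀ v : Fin d → ℝ, ‖v‖ < δ →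
    ∃ wt : Fin d → ℝ, MemTropHyp h wt ∧ MemTropHyp h' (wt - v) ∧ ‖wt - w‖ < ε

namespace TropAux

variable {d : ℕ}

/-- The combinatorial characterization of stable intersection points. -/
def GoodPt (h h' x : Fin d → ℝ) : Prop :=
  MemTropHyp h x ∧ MemTropHyp h' x ∧
    ∀ i j : Fin d, ¬ (typeSet h x ∪ typeSet h' x ⊆ {i, j})

lemma exists_mem_typeSet (hd : 0 < d) (h w : Fin d → ℝ) : ∃ i, i ∈ typeSet h w := by
  obtain ⟨i, -, hi⟩ := Finset.exists_min_image Finset.univ (fun j => h j + w j)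
    ⟨⟨0, hd⟩, Finset.mem_univ _⟩
  exact ⟨i, fun j => hi j (Finset.mem_univ j)⟩

/-- A positive "gap" below which all non-minimal values stay above the minimum. -/
def gapOf (h w : Fin d → ℝ) (i0 : Fin d) : ℝ :=
  Finset.univ.inf' ⟨i0, Finset.mem_univ i0⟩
    (fun k => if h i0 + w i0 < h k + w k then h k + w k - (h i0 + w i0) else 1)

lemma gapOf_pos (h w : Fin d → ℝ) (i0 : Fin d) : 0 < gapOf h w i0 := by
  rw [gapOf]; refine (Finset.lt_inf'_iff _).mpr ?_
  intro k _
  split_ifs with hx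
  · linarith
  · norm_num

lemma gapOf_le (h w : Fin d → ℝ) {i0 k : Fin d} (hk : h i0 + w i0 < h k + w k) :
    gapOf h w i0 ≤ h k + w k - (h i0 + w i0) := by
  have := Finset.inf'_le
    (fun k => if h i0 + w i0 < h k + w k then h k + w k - (h i0 + w i0) else 1)
    (Finset.mem_univ k)
  rw [if_pos hk] at this
  exact le_trans this (le_refl _)

lemma not_mem_typeSet_gap {h w : Fin d → ℝ} {i0 k : Fin d} (hi0 : i0 ∈ typeSet h w)
    (hk : k ∉ typeSet h w) : h i0 + w i0 + gapOf h w i0 ≤ h k + w k := by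
  have hlt : h i0 + w i0 < h k + w k := by
    rcases not_forall.mp hk with ⟨j, hj⟩
    push_neg at hj
    exact lt_of_le_of_lt (hi0 j) hj
  linarith [gapOf_le h w hlt]

/-- Perturbation stability of type sets. -/
lemma typeSet_subset {h w g u : Fin d → ℝ} {i0 : Fin d} {r : ℝ} (hi0 : i0 ∈ typeSet h w)
    (hr : ∀ j, |g j + u j - (h j + w j)| ≤ r) (h2 : 2 * r < gapOf h w i0) :
    typeSet g u ⊆ typeSet h w := by
  intro k hk
  by_contra hkT
  have hgap := not_mem_typeSet_gap hi0 hkT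
  have h1 : g k + u k ≤ g i0 + u i0 := hk i0
  have h2a := abs_le.mp (hr k)
  have h2b := abs_le.mp (hr i0)
  linarith [h2a.1, h2b.2]

lemma coord_le_norm (v : Fin d → ℝ) (j : Fin d) : |v j| ≤ ‖v‖ := by
  simpa [Real.norm_eq_abs] using norm_le_pi_norm v j

lemma good_of_stable (hd : 0 < d) {h h' w : Fin d → ℝ} (hs : StableMem h h' w) :
    GoodPt h h' w := by
  obtain ⟨i0, hi0⟩ := exists_mem_typeSet hd h w
  obtain ⟨i1, hi1⟩ := exists_mem_typeSet hd h' w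
  have hmem : MemTropHyp h w := by
    obtain ⟨δ, hδ, hδ'⟩ := hs (gapOf h w i0 / 4) (by linarith [gapOf_pos h w i0])
    obtain ⟨wt, hwt1, -, hwt3⟩ := hδ' 0 (by simpa using hδ)
    obtain ⟨a, b, hab, ha, hb⟩ := hwt1
    have hsub : typeSet h wt ⊆ typeSet h w := by
      refine typeSet_subset hi0 (r := ‖wt - w‖) (fun j => ?_)
        (by linarith [gapOf_pos h w i0])
      simpa [abs_sub_comm] using coord_le_norm (wt - w) j
    exact ⟨a, b, hab, hsub ha, hsub hb⟩
  have hmem' : MemTropHyp h' w := by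
    obtain ⟨δ, hδ, hδ'⟩ := hs (gapOf h' w i1 / 4) (by linarith [gapOf_pos h' w i1])
    obtain ⟨wt, -, hwt2, hwt3⟩ := hδ' 0 (by simpa using hδ)
    rw [sub_zero] at hwt2
    obtain ⟨a, b, hab, ha, hb⟩ := hwt2
    have hsub : typeSet h' wt ⊆ typeSet h' w := by
      refine typeSet_subset hi1 (r := ‖wt - w‖) (fun j => ?_)
        (by linarith [gapOf_pos h' w i1])
      simpa [abs_sub_comm] using coord_le_norm (wt - w) j
    exact ⟨a, b, hab, hsub ha, hsub hb⟩
  refine ⟨hmem, hmem', fun i j hij => ?_⟩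
  -- bad case : both type sets contained in {i, j}
  obtain ⟨a, b, hab, ha, hb⟩ := hmem
  obtain ⟨a', b', hab', ha', hb'⟩ := hmem'
  -- i ≠ j and  i, j ∈ both type sets
  have hinj : i ≠ j := by
    rintro rfl
    rcases hij (Set.mem_union_left _ ha) with h1 <;> rcases hij (Set.mem_union_left _ hb) with h2
    simp_all
  have hpair : ∀ {c c' : Fin d}, c ≠ c' → c ∈ ({i, j} : Set (Fin d)) →
      c' ∈ ({i, j} : Set (Fin d)) → (i = c ∧ j = c') ∨ (i = c' ∧ j = c) := by
    rintro c c' hcc (rfl | rfl) (h2 | h2) <;> simp_all [eq_comm] <;> tauto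
  have hiT : i ∈ typeSet h w ∧ j ∈ typeSet h w := by
    rcases hpair hab (hij (Set.mem_union_left _ ha)) (hij (Set.mem_union_left _ hb)) with
      ⟨rfl, rfl⟩ | ⟨rfl, rfl⟩ <;> exact ⟨by assumption, by assumption⟩
  have hiT' : i ∈ typeSet h' w ∧ j ∈ typeSet h' w := by
    rcases hpair hab' (hij (Set.mem_union_right _ ha')) (hij (Set.mem_union_right _ hb')) with
      ⟨rfl, rfl⟩ | ⟨rfl, rfl⟩ <;> exact ⟨by assumption, by assumption⟩
  -- now run the stability argument with a perturbation in direction i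
  set ε0 := min (gapOf h w i0) (gapOf h' w i1) / 4 with hε0
  have hε0pos : 0 < ε0 := by
    have h1 := gapOf_pos h w i0; have h2 := gapOf_pos h' w i1
    have : 0 < min (gapOf h w i0) (gapOf h' w i1) := lt_min h1 h2
    simp only [hε0]; linarith
  have hεgap : 4 * ε0 ≤ gapOf h w i0 ∧ 4 * ε0 ≤ gapOf h' w i1 := by
    constructor <;> simp only [hε0] <;>
      [linarith [min_le_left (gapOf h w i0) (gapOf h' w i1)];
       linarith [min_le_right (gapOf h w i0) (gapOf h' w i1)]]
  obtain ⟨δ, hδ, hδ'⟩ := hs ε0 hε0pos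
  set c := min δ ε0 / 2 with hc
  have hcpos : 0 < c := by
    have : 0 < min δ ε0 := lt_min hδ hε0pos
    simp only [hc]; linarith
  have hcδ : c < δ := by
    have := min_le_left δ ε0; simp only [hc]; linarith
  have hcε : c ≤ ε0 := by
    have := min_le_right δ ε0; simp only [hc]; linarith
  set v : Fin d → ℝ := fun k => if k = i then c else 0 with hv
  have hvnorm : ‖v‖ < δ := by
    rw [pi_norm_lt_iff hδ]
    intro k
    simp only [hv, Real.norm_eq_abs]
    split_ifs <;> [rw [abs_of_pos hcpos]; simp] <;> [exact hcδ; exact hδ]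
  obtain ⟨wt, hwt1, hwt2, hwt3⟩ := hδ' v hvnorm
  -- typeSet h wt ⊆ {i, j}
  have hsub1 : typeSet h wt ⊆ typeSet h w := by
    refine typeSet_subset hi0 (r := ‖wt - w‖) (fun k => ?_) ?_
    · simpa [abs_sub_comm] using coord_le_norm (wt - w) k
    · linarith [hεgap.1]
  have hsub2 : typeSet h' (wt - v) ⊆ typeSet h' w := by
    refine typeSet_subset hi1 (r := ‖wt - w‖ + c) (fun k => ?_) ?_
    · have h1 : |wt k - w k| ≤ ‖wt - w‖ := by
        simpa using coord_le_norm (wt - w) k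
      have h2 : |v k| ≤ c := by
        simp only [hv]; split_ifs
        · rw [abs_of_pos hcpos]
        · simp; linarith
      have : h' k + (wt - v) k - (h' k + w k) = (wt k - w k) - v k := by
        simp [Pi.sub_apply]; ring
      rw [this]
      calc |wt k - w k - v k| ≤ |wt k - w k| + |v k| := abs_sub _ _
        _ ≤ ‖wt - w‖ + c := add_le_add h1 h2
    · linarith [hεgap.2]
  -- both i and j are in the perturbed type sets
  obtain ⟨c1, c2, hc12, hc1, hc2⟩ := hwt1
  obtain ⟨c1', c2', hc12', hc1', hc2'⟩ := hwt2
  have hT1 : i ∈ typeSet h wt ∧ j ∈ typeSet h wt := by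
    rcases hpair hc12 (hij (Set.mem_union_left _ (hsub1 hc1)))
        (hij (Set.mem_union_left _ (hsub1 hc2))) with ⟨rfl, rfl⟩ | ⟨rfl, rfl⟩ <;>
      exact ⟨by assumption, by assumption⟩
  have hT2 : i ∈ typeSet h' (wt - v) ∧ j ∈ typeSet h' (wt - v) := by
    rcases hpair hc12' (hij (Set.mem_union_right _ (hsub2 hc1')))
        (hij (Set.mem_union_right _ (hsub2 hc2'))) with ⟨rfl, rfl⟩ | ⟨rfl, rfl⟩ <;>
      exact ⟨by assumption, by assumption⟩
  -- extract the four equalities and derive a contradiction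
  have e1 : h i + wt i = h j + wt j := le_antisymm (hT1.1 j) (hT1.2 i)
  have e2 : h' i + (wt i - v i) = h' j + (wt j - v j) := by
    have := le_antisymm (hT2.1 j) (hT2.2 i)
    simpa [Pi.sub_apply] using this
  have e3 : h i + w i = h j + w j := le_antisymm (hiT.1 j) (hiT.2 i)
  have e4 : h' i + w i = h' j + w j := le_antisymm (hiT'.1 j) (hiT'.2 i)
  have hvi : v i = c := by simp [hv]
  have hvj : v j = 0 := by simp [hv, hinj.symm]
  rw [hvi, hvj] at e2
  linarith

lemma typeSet_sub (h' v u : Fin d → ℝ) : typeSet h' (u - v) = typeSet (h' - v) u := by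
  ext i
  constructor <;> intro H j <;> have := H j <;> simp only [Pi.sub_apply] at * <;> linarith

lemma memTropHyp_sub (h' v u : Fin d → ℝ) : MemTropHyp (h' - v) u ↔ MemTropHyp h' (u - v) := by
  unfold MemTropHyp; rw [typeSet_sub]

lemma stable_of_good (hd : 0 < d) {h h' w : Fin d → ℝ} (hg : GoodPt h h' w) :
    StableMem h h' w := by
  classical
  obtain ⟨hm1, hm2, hm3⟩ := hg
  obtain ⟨i0, hi0⟩ := exists_mem_typeSet hd h w
  obtain ⟨i1, hi1⟩ := exists_mem_typeSet hd h' w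
  intro ε hε
  set δ := min ε (min (gapOf h w i0) (gapOf h' w i1)) / 8 with hδdef
  have hg1 := gapOf_pos h w i0
  have hg2 := gapOf_pos h' w i1
  have hδpos : 0 < δ := by
    have : 0 < min ε (min (gapOf h w i0) (gapOf h' w i1)) :=
      lt_min hε (lt_min hg1 hg2)
    simp only [hδdef]; linarith
  have hδε : 8 * δ ≤ ε := by
    have := min_le_left ε (min (gapOf h w i0) (gapOf h' w i1))
    simp only [hδdef]; linarith
  have hδgap1 : 8 * δ ≤ gapOf h w i0 := by
    have h1 := min_le_right ε (min (gapOf h w i0) (gapOf h' w i1))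
    have h2 := min_le_left (gapOf h w i0) (gapOf h' w i1)
    simp only [hδdef]; linarith
  have hδgap2 : 8 * δ ≤ gapOf h' w i1 := by
    have h1 := min_le_right ε (min (gapOf h w i0) (gapOf h' w i1))
    have h2 := min_le_right (gapOf h w i0) (gapOf h' w i1)
    simp only [hδdef]; linarith
  refine ⟨δ, hδpos, fun v hv => ?_⟩
  set g' : Fin d → ℝ := h' - v with hg'
  have hvc : ∀ k, |v k| < δ := fun k => lt_of_le_of_lt (coord_le_norm v k) hv
  obtain ⟨s, hs⟩ := exists_mem_typeSet hd g' w
  have hg'val : ∀ k, g' k + w k = h' k + w k - v k := by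
    intro k; simp only [hg', Pi.sub_apply]; ring
  -- the perturbed minimum is within δ of the original
  have hm''ub : g' s + w s ≤ h' i1 + w i1 + δ := by
    have h1 := hs i1
    rw [hg'val i1] at h1
    linarith [(abs_lt.mp (hvc i1)).1]
  have hm''lb : h' i1 + w i1 - δ ≤ g' s + w s := by
    rw [hg'val s]
    have := (abs_lt.mp (hvc s)).2
    linarith [hi1 s]
  -- θ is small on typeSet h' w
  have hθsmall : ∀ t, t ∈ typeSet h' w → g' t + w t - (g' s + w s) ≤ 2 * δ := by
    intro t ht
    have h1 : h' t + w t = h' i1 + w i1 := le_antisymm (ht i1) (hi1 t)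
    rw [hg'val t, h1]
    have := (abs_lt.mp (hvc t)).1
    linarith
  -- θ is large off typeSet h' w
  have hθbig : ∀ t, t ∉ typeSet h' w → 6 * δ ≤ g' t + w t - (g' s + w s) := by
    intro t ht
    have h1 := not_mem_typeSet_gap hi1 ht
    rw [hg'val t]
    have := (abs_lt.mp (hvc t)).2
    linarith
  have hθnonneg : ∀ k, 0 ≤ g' k + w k - (g' s + w s) := fun k => by linarith [hs k]
  by_cases hA2 : ∃ t t', t ≠ t' ∧ t ∈ typeSet g' w ∧ t' ∈ typeSet g' w
  · -- the perturbed min is already attained twice : take wt = w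
    refine ⟨w, hm1, ?_, by simpa using hε⟩
    rw [← memTropHyp_sub]
    exact hA2
  · push_neg at hA2
    -- s is the unique argmin of g' + w
    have hsmem : s ∈ typeSet h' w := by
      refine typeSet_subset hi1 (r := δ) (fun k => ?_) (by linarith) hs
      rw [hg'val k, show h' k + w k - v k - (h' k + w k) = -(v k) by ring, abs_neg]
      exact (hvc k).le
    by_cases hex : ∃ t, t ∈ typeSet h' w ∧ t ∉ typeSet h w ∧ t ≠ s
    · obtain ⟨t, htT', htT, hts⟩ := hex
      set θt := g' t + w t - (g' s + w s) with hθt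
      set wt : Fin d → ℝ := fun k => if k = t then w t - θt else w k with hwt
      have hwtk : ∀ k, k ≠ t → wt k = w k := fun k hk => by simp [hwt, hk]
      have hwtt : wt t = w t - θt := by simp [hwt]
      have hθt2 : θt ≤ 2 * δ := hθsmall t htT'
      have hθt0 : 0 ≤ θt := hθnonneg t
      refine ⟨wt, ?_, ?_, ?_⟩
      · obtain ⟨a, b, hab, ha, hb⟩ := hm1
        have hat : a ≠ t := fun hh => htT (hh ▸ ha)
        have hbt : b ≠ t := fun hh => htT (hh ▸ hb)
        have key : ∀ c, c ∈ typeSet h w → c ∈ typeSet h wt := by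
          intro c hc k
          have hct : c ≠ t := fun hh => htT (hh ▸ hc)
          rw [hwtk c hct]
          by_cases hkt : k = t
          · subst hkt
            rw [hwtt]
            have hgap := not_mem_typeSet_gap hi0 htT
            have : h c + w c = h i0 + w i0 := le_antisymm (hc i0) (hi0 c)
            linarith
          · rw [hwtk k hkt]; exact hc k
        exact ⟨a, b, hab, key a ha, key b hb⟩
      · rw [← memTropHyp_sub]
        have hkey : ∀ k, g' s + w s ≤ g' k + wt k := by
          intro k
          by_cases hkt : k = t
          · subst hkt; rw [hwtt]; simp only [hθt]; linarith
          · rw [hwtk k hkt]; exact hs k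
        refine ⟨s, t, fun hh => hts hh.symm, ?_, ?_⟩
        · intro k
          rw [hwtk s (fun hh => hts hh.symm)]
          exact hkey k
        · intro k
          rw [hwtt]
          have : g' t + (w t - θt) = g' s + w s := by simp only [hθt]; ring
          rw [this]; exact hkey k
      · rw [pi_norm_lt_iff hε]
        intro k
        by_cases hkt : k = t
        · subst hkt
          simp only [Pi.sub_apply, hwtt, Real.norm_eq_abs]
          rw [abs_of_nonpos (by linarith)]
          linarith
        · rw [Pi.sub_apply, hwtk k hkt]
          simp only [sub_self, norm_zero]; linarith
    · push_neg at hex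
      -- every element of typeSet h' w other than s lies in typeSet h w
      -- pick t minimizing θ over typeSet h' w \ {s}
      have hFne : ∃ k, k ∈ typeSet h' w ∧ k ≠ s := by
        obtain ⟨a, b, hab, ha, hb⟩ := hm2
        by_cases has : a = s
        · exact ⟨b, hb, fun hh => hab (has ▸ hh ▸ rfl)⟩
        · exact ⟨a, ha, has⟩
      set F := Finset.univ.filter (fun k => k ∈ typeSet h' w ∧ k ≠ s) with hF
      have hFne' : F.Nonempty := by
        obtain ⟨k, h1, h2⟩ := hFne
        exact ⟨k, by simp [hF, h1, h2]⟩
      obtain ⟨t, htF, htmin⟩ := Finset.exists_min_image F (fun k => g' k + w k) hFne'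
      have htT' : t ∈ typeSet h' w := (Finset.mem_filter.mp htF).2.1
      have hts : t ≠ s := (Finset.mem_filter.mp htF).2.2
      have htT : t ∈ typeSet h w := by
        by_contra hc; exact hts (hex t htT' hc)
      -- pick u' in typeSet h w distinct from s and t
      have hu' : ∃ u', u' ∈ typeSet h w ∧ u' ≠ s ∧ u' ≠ t := by
        by_contra hcon
        push_neg at hcon
        refine hm3 s t ?_
        rintro k (hk | hk)
        · rcases eq_or_ne k s with rfl | hks
          · exact Set.mem_insert _ _
          · have hkt := hcon k hk hks
            simp [hkt]
        · rcases eq_or_ne k s with rfl | hks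
          · exact Set.mem_insert _ _
          · have hkT : k ∈ typeSet h w := by
              by_contra hc; exact hks (hex k hk hc)
            have hkt := hcon k hkT hks
            simp [hkt]
      obtain ⟨u', hu'T, hu's, hu't⟩ := hu'
      set θt := g' t + w t - (g' s + w s) with hθt
      have hθt2 : θt ≤ 2 * δ := hθsmall t htT'
      have hθt0 : 0 ≤ θt := hθnonneg t
      set wt : Fin d → ℝ := fun k => if k = t ∨ k = u' then w k - θt else w k with hwt
      have hwtk : ∀ k, k ≠ t → k ≠ u' → wt k = w k := fun k h1 h2 => by
        simp [hwt, h1, h2]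
      have hwtt : wt t = w t - θt := by simp [hwt]
      have hwtu : wt u' = w u' - θt := by simp [hwt]
      -- θ u' ≥ θ t
      have hθu : θt ≤ g' u' + w u' - (g' s + w s) := by
        by_cases hu'T' : u' ∈ typeSet h' w
        · have hmem : u' ∈ F := by simp [hF, hu'T', hu's]
          simp only [hθt]; linarith [htmin u' hmem]
        · linarith [hθbig u' hu'T']
      refine ⟨wt, ?_, ?_, ?_⟩
      · -- h-min attained at t and u'
        have hmt : h t + w t = h i0 + w i0 := le_antisymm (htT i0) (hi0 t)
        have hmu : h u' + w u' = h i0 + w i0 := le_antisymm (hu'T i0) (hi0 u')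
        have hkey : ∀ k, h i0 + w i0 - θt ≤ h k + wt k := by
          intro k
          by_cases hk : k = t ∨ k = u'
          · rcases hk with rfl | rfl
            · rw [hwtt]; linarith
            · rw [hwtu]; linarith
          · push_neg at hk
            rw [hwtk k hk.1 hk.2]
            linarith [hi0 k]
        refine ⟨t, u', Ne.symm hu't, ?_, ?_⟩
        · intro k; rw [hwtt]; have : h t + (w t - θt) = h i0 + w i0 - θt := by linarith
          rw [this]; exact hkey k
        · intro k; rw [hwtu]; have : h u' + (w u' - θt) = h i0 + w i0 - θt := by linarith
          rw [this]; exact hkey k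
      · rw [← memTropHyp_sub]
        have hkey : ∀ k, g' s + w s ≤ g' k + wt k := by
          intro k
          by_cases hk : k = t ∨ k = u'
          · rcases hk with rfl | rfl
            · rw [hwtt]; simp only [hθt]; linarith
            · rw [hwtu]; linarith
          · push_neg at hk
            rw [hwtk k hk.1 hk.2]; exact hs k
        refine ⟨s, t, fun hh => hts hh.symm, ?_, ?_⟩
        · intro k
          rw [hwtk s (fun hh => hts hh.symm) (fun hh => hu's hh.symm)]
          exact hkey k
        · intro k
          rw [hwtt]
          have : g' t + (w t - θt) = g' s + w s := by simp only [hθt]; ring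
          rw [this]; exact hkey k
      · rw [pi_norm_lt_iff hε]
        intro k
        by_cases hk : k = t ∨ k = u'
        · have : wt k = w k - θt := by
            rcases hk with rfl | rfl; exacts [hwtt, hwtu]
          rw [Pi.sub_apply, this]
          simp only [Real.norm_eq_abs]
          rw [show w k - θt - w k = -θt by ring, abs_neg, abs_of_nonneg hθt0]
          linarith
        · push_neg at hk
          rw [Pi.sub_apply, hwtk k hk.1 hk.2]
          simp only [sub_self, norm_zero]; linarith

/-- Selection of indices: auxiliary version. -/
lemma selection_aux {α : Type*} {T T' : Set α} {a j1 j2 : α}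
    (ha : a ∈ T) (haT' : a ∉ T') (hj : j1 ≠ j2) (hj1 : j1 ∈ T') (hj2 : j2 ∈ T')
    (hT : ∃ b c, b ≠ c ∧ b ∈ T ∧ c ∈ T) :
    ∃ p q, p ≠ q ∧ p ∈ T ∧ q ∈ T' ∧ (∃ r1 ∈ T, r1 ≠ p ∧ r1 ≠ q) ∧
      (∃ r2 ∈ T', r2 ≠ p ∧ r2 ≠ q) := by
  classical
  by_cases hc : T ⊆ {a, j1}
  · obtain ⟨b, c, hbc, hb, hc'⟩ := hT
    have hj1T : j1 ∈ T := by
      rcases hc hb with rfl | rfl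
      · rcases hc hc' with rfl | rfl
        · exact absurd rfl hbc
        · exact hc'
      · exact hb
    have hj1a : j1 ≠ a := fun hh => haT' (hh ▸ hj1)
    exact ⟨a, j2, fun hh => haT' (hh ▸ hj2), ha, hj2, ⟨j1, hj1T, hj1a, hj⟩,
      ⟨j1, hj1, hj1a, hj⟩⟩
  · obtain ⟨r1, hr1T, hr1⟩ := Set.not_subset.mp hc
    simp only [Set.mem_insert_iff, Set.mem_singleton_iff, not_or] at hr1
    exact ⟨a, j1, fun hh => haT' (hh ▸ hj1), ha, hj1, ⟨r1, hr1T, hr1.1, hr1.2⟩,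
      ⟨j2, hj2, fun hh => haT' (hh ▸ hj2), hj.symm⟩⟩

/-- Selection of indices `p ∈ T`, `q ∈ T'` leaving residual elements in both sets. -/
lemma selection {α : Type*} {T T' : Set α}
    (hT : ∃ a b, a ≠ b ∧ a ∈ T ∧ b ∈ T) (hT' : ∃ a b, a ≠ b ∧ a ∈ T' ∧ b ∈ T')
    (hU : ∀ i j, ¬ (T ∪ T' ⊆ {i, j})) :
    ∃ p q, p ≠ q ∧ p ∈ T ∧ q ∈ T' ∧ (∃ r1 ∈ T, r1 ≠ p ∧ r1 ≠ q) ∧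
      (∃ r2 ∈ T', r2 ≠ p ∧ r2 ≠ q) := by
  classical
  by_cases h1 : ∃ a ∈ T, a ∉ T'
  · obtain ⟨a, ha, ha'⟩ := h1
    obtain ⟨j1, j2, hj, hj1, hj2⟩ := hT'
    exact selection_aux ha ha' hj hj1 hj2 hT
  · push_neg at h1
    by_cases h2 : ∃ a ∈ T', a ∉ T
    · obtain ⟨a, ha, ha'⟩ := h2
      obtain ⟨j1, j2, hj, hj1, hj2⟩ := hT
      obtain ⟨p, q, hpq, hp, hq, hr1, hr2⟩ := selection_aux ha ha' hj hj1 hj2 hT'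
      obtain ⟨r1, hr1a, hr1b, hr1c⟩ := hr1
      obtain ⟨r2, hr2a, hr2b, hr2c⟩ := hr2
      exact ⟨q, p, fun hh => hpq hh.symm, hq, hp, ⟨r2, hr2a, hr2c, hr2b⟩, ⟨r1, hr1a, hr1c, hr1b⟩⟩
    · push_neg at h2
      have heq : T = T' := Set.Subset.antisymm h1 h2
      obtain ⟨a, b, hab, ha, hb⟩ := hT
      obtain ⟨r, hr, hrab⟩ := Set.not_subset.mp (hU a b)
      simp only [Set.mem_insert_iff, Set.mem_singleton_iff, not_or] at hrab
      have hrT : r ∈ T := by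
        rcases hr with hr | hr
        · exact hr
        · exact heq ▸ hr
      exact ⟨a, b, hab, ha, heq ▸ hb, ⟨r, hrT, hrab.1, hrab.2⟩,
        ⟨r, heq ▸ hrT, hrab.1, hrab.2⟩⟩

end TropAux

namespace LiftAux

open HahnSeries

lemma coeff_sum {ι : Type*} (s : Finset ι) (f : ι → K) (e : ℝ) :
    (∑ i ∈ s, f i).coeff e = ∑ i ∈ s, (f i).coeff e := by
  classical
  induction s using Finset.induction_on with
  | empty => simp
  | insert _ _ ha ih =>
    rw [Finset.sum_insert ha, Finset.sum_insert ha, HahnSeries.coeff_add, ih]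

lemma order_eq_of_coeff {f : K} {e : ℝ} (h1 : f.coeff e ≠ 0)
    (h2 : ∀ e', e' < e → f.coeff e' = 0) : f ≠ 0 ∧ f.order = e := by
  have hf : f ≠ 0 := fun hh => h1 (by simp [hh])
  refine ⟨hf, le_antisymm (HahnSeries.order_le_of_coeff_ne_zero h1) ?_⟩
  by_contra hcon
  push_neg at hcon
  exact (HahnSeries.coeff_order_eq_zero.not.mpr hf) (h2 _ hcon)

lemma single_sub_single {e1 e2 : ℝ} {z1 z2 : ℂ} (hz1 : z1 ≠ 0) (hz2 : z2 ≠ 0)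
    (hne : e1 = e2 → z1 ≠ z2) :
    ((single e1 z1 - single e2 z2 : K) ≠ 0) ∧
      (single e1 z1 - single e2 z2 : K).order = min e1 e2 := by
  rcases lt_trichotomy e1 e2 with hlt | heq | hgt
  · have := order_eq_of_coeff (f := single e1 z1 - single e2 z2) (e := e1)
      (by simp [HahnSeries.coeff_sub, HahnSeries.coeff_single, hlt.ne, hz1])
      (fun e' he' => by
        simp [HahnSeries.coeff_sub, HahnSeries.coeff_single, he'.ne, (he'.trans hlt).ne])
    rw [min_eq_left hlt.le]
    exact this
  · subst heq
    have hz12 : z1 - z2 ≠ 0 := sub_ne_zero.mpr (hne rfl)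
    have := order_eq_of_coeff (f := single e1 z1 - single e1 z2) (e := e1)
      (by simp [HahnSeries.coeff_sub, HahnSeries.coeff_single, hz12])
      (fun e' he' => by simp [HahnSeries.coeff_sub, HahnSeries.coeff_single, he'.ne])
    rw [min_self]
    exact this
  · have := order_eq_of_coeff (f := single e1 z1 - single e2 z2) (e := e2)
      (by simp [HahnSeries.coeff_sub, HahnSeries.coeff_single, hgt.ne, neg_ne_zero, hz2])
      (fun e' he' => by
        simp [HahnSeries.coeff_sub, HahnSeries.coeff_single, he'.ne, (he'.trans hgt).ne])
    rw [min_eq_right hgt.le]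
    exact this

lemma order_div {a b : K} (ha : a ≠ 0) (hb : b ≠ 0) :
    (a / b).order = a.order - b.order := by
  have hbi : b⁻¹ ≠ 0 := inv_ne_zero hb
  have h1 : (b * b⁻¹).order = 0 := by rw [mul_inv_cancel₀ hb, HahnSeries.order_one]
  rw [HahnSeries.order_mul hb hbi] at h1
  rw [div_eq_mul_inv, HahnSeries.order_mul ha hbi]
  linarith

variable {d : ℕ}

/-- Generic constants. -/
def cc (j : Fin d) : ℂ := ((j : ℕ) : ℂ) + 1

lemma cc_ne (j : Fin d) : cc j ≠ 0 := Nat.cast_add_one_ne_zero _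

lemma cc_inj {j k : Fin d} (hjk : j ≠ k) : cc j ≠ cc k := by
  simp only [cc]
  intro hh
  have : ((j : ℕ) : ℂ) = ((k : ℕ) : ℂ) := by linear_combination hh
  exact hjk (Fin.ext (Nat.cast_injective this))

def av (h : Fin d → ℝ) (j : Fin d) : K := single (h j) 1

def bv (h' : Fin d → ℝ) (j : Fin d) : K := single (h' j) (cc j)

/-- The 2×d "matrix" as a linear map. -/
def phi (h h' : Fin d → ℝ) : (Fin d → K) →ₗ[K] K × K where
  toFun ℓ := (∑ j, av h j * ℓ j, ∑ j, bv h' j * ℓ j)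
  map_add' f g := by
    simp only [Pi.add_apply, mul_add, Finset.sum_add_distrib, Prod.mk_add_mk]
  map_smul' c f := by
    simp only [Pi.smul_apply, smul_eq_mul, RingHom.id_apply, Prod.smul_mk, smul_eq_mul]
    rw [Finset.mul_sum, Finset.mul_sum]
    congr 1 <;> exact Finset.sum_congr rfl (fun j _ => by ring)

lemma phi_surj (hd : 3 ≤ d) (h h' : Fin d → ℝ) :
    LinearMap.range (phi h h') = ⊤ := by
  classical
  rw [LinearMap.range_eq_top]
  rintro ⟨y1, y2⟩
  set p0 : Fin d := ⟨0, by omega⟩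
  set p1 : Fin d := ⟨1, by omega⟩
  have h01 : p0 ≠ p1 := by simp [p0, p1, Fin.ext_iff]
  set Δ : K := av h p0 * bv h' p1 - av h p1 * bv h' p0 with hΔ
  have hΔeq : Δ = single (h p0 + h' p1) (cc p1) - single (h p1 + h' p0) (cc p0) := by
    simp [hΔ, av, bv, HahnSeries.single_mul_single]
  have hΔne : Δ ≠ 0 := by
    rw [hΔeq]
    exact (single_sub_single (cc_ne p1) (cc_ne p0) (fun _ => cc_inj h01.symm)).1
  set ℓ : Fin d → K := fun k =>
    if k = p0 then (bv h' p1 * y1 - av h p1 * y2) / Δ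
    else if k = p1 then (av h p0 * y2 - bv h' p0 * y1) / Δ else 0 with hℓ
  refine ⟨ℓ, ?_⟩
  have hsupp : ∀ k, k ∉ ({p0, p1} : Finset (Fin d)) → ℓ k = 0 := by
    intro k hk
    simp only [Finset.mem_insert, Finset.mem_singleton, not_or] at hk
    simp [hℓ, hk.1, hk.2]
  have hsum : ∀ (F : Fin d → K), (∀ k ∈ Finset.univ, k ∉ ({p0, p1} : Finset (Fin d)) →
      F k * ℓ k = 0) → ∑ j, F j * ℓ j = F p0 * ℓ p0 + F p1 * ℓ p1 := by
    intro F hF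
    rw [← Finset.sum_subset (Finset.subset_univ ({p0, p1} : Finset (Fin d))) hF,
      Finset.sum_pair h01]
  have hl0 : ℓ p0 = (bv h' p1 * y1 - av h p1 * y2) / Δ := by simp [hℓ]
  have hl1 : ℓ p1 = (av h p0 * y2 - bv h' p0 * y1) / Δ := by simp [hℓ, h01.symm]
  have key : phi h h' ℓ = (y1, y2) := by
    show (∑ j, av h j * ℓ j, ∑ j, bv h' j * ℓ j) = (y1, y2)
    have e1 : ∑ j, av h j * ℓ j = y1 := by
      rw [hsum (av h) (fun k _ hk => by rw [hsupp k hk, mul_zero]), hl0, hl1]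
      field_simp
      ring
    have e2 : ∑ j, bv h' j * ℓ j = y2 := by
      rw [hsum (bv h') (fun k _ hk => by rw [hsupp k hk, mul_zero]), hl0, hl1]
      field_simp
      ring
    rw [e1, e2]
  exact key

lemma finrank_ker (hd : 3 ≤ d) (h h' : Fin d → ℝ) :
    Module.finrank K (LinearMap.ker (phi h h')) = d - 2 := by
  have h1 := LinearMap.finrank_range_add_finrank_ker (phi h h')
  rw [phi_surj hd h h', finrank_top] at h1
  simp [Module.finrank_pi, Module.finrank_prod] at h1
  omega

open TropAux

lemma pair_eq {α : Type*} {T : Set α} {i j : α}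
    (hT : ∃ a b, a ≠ b ∧ a ∈ T ∧ b ∈ T) (hsub : T ⊆ {i, j}) : i ∈ T ∧ j ∈ T := by
  obtain ⟨a, b, hab, ha, hb⟩ := hT
  rcases hsub ha with rfl | rfl <;> rcases hsub hb with rfl | rfl
  · exact absurd rfl hab
  · exact ⟨ha, hb⟩
  · exact ⟨hb, ha⟩
  · exact absurd rfl hab

/-- If a series combination with monomial coefficients vanishes then the minimum of
`e j + order (ℓ j)` is attained at least twice. -/
lemma two_min (hd : 0 < d) {z : Fin d → ℂ} {ℓ : Fin d → K} (hz : ∀ j, z j ≠ 0)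
    (hl : ∀ j, ℓ j ≠ 0) {e : Fin d → ℝ}
    (hsum : ∑ j, (single (e j) (z j) : K) * ℓ j = 0) :
    MemTropHyp e (fun j => (ℓ j).order) := by
  classical
  set x : Fin d → ℝ := fun j => (ℓ j).order with hx
  obtain ⟨i0, hi0⟩ := exists_mem_typeSet hd e x
  set m := e i0 + x i0 with hm
  have hc : ∑ j, ((single (e j) (z j) : K) * ℓ j).coeff m = 0 := by
    rw [← coeff_sum, hsum, HahnSeries.coeff_zero]
  have hterm : ∀ j, ((single (e j) (z j) : K) * ℓ j).coeff m
      = z j * (ℓ j).coeff (m - e j) := by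
    intro j
    have hh := HahnSeries.coeff_single_mul_add (r := z j) (x := ℓ j) (a := m - e j) (b := e j)
    rw [show (m - e j) + (e j) = m by ring] at hh
    exact hh
  have hvan : ∀ j, j ∉ typeSet e x → (ℓ j).coeff (m - e j) = 0 := by
    intro j hj
    apply HahnSeries.coeff_eq_zero_of_lt_order
    have hlt : m < e j + x j := by
      rcases lt_or_eq_of_le (hi0 j) with hlt | heq
      · exact hlt
      · exfalso
        apply hj
        simp only [typeSet, Set.mem_setOf_eq]
        intro l
        have := hi0 l
        linarith
    show m - e j < (ℓ j).order
    have : (ℓ j).order = x j := rfl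
    rw [this]; linarith
  by_contra hcon
  unfold MemTropHyp at hcon
  push_neg at hcon
  have hsub : ∀ k, k ∈ typeSet e x → k = i0 := by
    intro k hk
    by_contra hki
    exact (hcon k i0 hki hk) hi0
  have hzero : ∀ j ∈ Finset.univ, j ∉ ({i0} : Finset (Fin d)) →
      ((single (e j) (z j) : K) * ℓ j).coeff m = 0 := by
    intro j _ hj
    rw [Finset.mem_singleton] at hj
    have : j ∉ typeSet e x := fun hh => hj (hsub j hh)
    rw [hterm j, hvan j this, mul_zero]
  rw [← Finset.sum_subset (Finset.subset_univ ({i0} : Finset (Fin d))) hzero,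
    Finset.sum_singleton, hterm i0, show m - e i0 = x i0 by ring] at hc
  exact (mul_ne_zero (hz i0) ((HahnSeries.coeff_order_eq_zero.not.mpr (hl i0)))) hc

/-- Forward direction: coordinatewise orders of an all-nonzero kernel vector form a good
point. -/
lemma good_of_mem (hd : 3 ≤ d) {h h' : Fin d → ℝ} {ℓ : Fin d → K}
    (hker : phi h h' ℓ = 0) (hl : ∀ j, ℓ j ≠ 0) :
    GoodPt h h' (fun j => (ℓ j).order) := by
  classical
  have hd0 : 0 < d := by omega
  have hks : (∑ j, av h j * ℓ j, ∑ j, bv h' j * ℓ j) = ((0 : K), (0 : K)) := hker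
  rw [Prod.mk.injEq] at hks
  have hs1 : ∑ j, (single (h j) ((fun _ => (1 : ℂ)) j) : K) * ℓ j = 0 := hks.1
  have hs2 : ∑ j, (single (h' j) (cc j) : K) * ℓ j = 0 := hks.2
  set x : Fin d → ℝ := fun j => (ℓ j).order with hx
  have hm1 : MemTropHyp h x := two_min hd0 (fun _ => one_ne_zero) hl hs1
  have hm2 : MemTropHyp h' x := two_min hd0 cc_ne hl hs2
  refine ⟨hm1, hm2, fun i j hij => ?_⟩
  have hij1 : typeSet h x ⊆ {i, j} := fun k hk => hij (Set.mem_union_left _ hk)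
  have hij2 : typeSet h' x ⊆ {i, j} := fun k hk => hij (Set.mem_union_right _ hk)
  obtain ⟨hiT, hjT⟩ := pair_eq hm1 hij1
  obtain ⟨hiT', hjT'⟩ := pair_eq hm2 hij2
  have hijne : i ≠ j := by
    obtain ⟨a, b, hab, ha, hb⟩ := hm1
    intro hh
    subst hh
    have h1 := hij1 ha
    have h2 := hij1 hb
    simp only [Set.mem_insert_iff, Set.mem_singleton_iff, or_self] at h1 h2
    exact hab (h1.trans h2.symm)
  set m := h i + x i with hm
  set m' := h' i + x i with hm'
  have hmj : h j + x j = m := le_antisymm (hjT i) (hiT j)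
  have hmj' : h' j + x j = m' := le_antisymm (hjT' i) (hiT' j)
  -- the two leading-coefficient relations
  have key : ∀ (e : Fin d → ℝ) (z : Fin d → ℂ) (mm : ℝ), e i + x i = mm → e j + x j = mm →
      i ∈ typeSet e x → typeSet e x ⊆ {i, j} →
      (∑ k, (single (e k) (z k) : K) * ℓ k = 0) →
      z i * (ℓ i).coeff (x i) + z j * (ℓ j).coeff (x j) = 0 := by
    intro e z mm hei hej hitype hsubt hsum
    have hc : ∑ k, ((single (e k) (z k) : K) * ℓ k).coeff mm = 0 := by
      rw [← coeff_sum, hsum, HahnSeries.coeff_zero]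
    have hterm : ∀ k, ((single (e k) (z k) : K) * ℓ k).coeff mm
        = z k * (ℓ k).coeff (mm - e k) := by
      intro k
      have hh := HahnSeries.coeff_single_mul_add (r := z k) (x := ℓ k) (a := mm - e k)
        (b := e k)
      rw [show (mm - e k) + (e k) = mm by ring] at hh
      exact hh
    have hvan : ∀ k, k ∉ typeSet e x → ((single (e k) (z k) : K) * ℓ k).coeff mm = 0 := by
      intro k hk
      rw [hterm k]
      have hlt : mm < e k + x k := by
        have h0 := hitype k
        rw [hei] at h0
        rcases lt_or_eq_of_le h0 with hlt | heq
        · exact hlt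
        · exfalso
          apply hk
          simp only [typeSet, Set.mem_setOf_eq]
          intro l
          have := hitype l
          linarith
      have hco : (ℓ k).coeff (mm - e k) = 0 := by
        apply HahnSeries.coeff_eq_zero_of_lt_order
        show mm - e k < (ℓ k).order
        have hxk : (ℓ k).order = x k := rfl
        rw [hxk]; linarith
      rw [hco, mul_zero]
    have hzero : ∀ k ∈ Finset.univ, k ∉ ({i, j} : Finset (Fin d)) →
        ((single (e k) (z k) : K) * ℓ k).coeff mm = 0 := by
      intro k _ hk
      simp only [Finset.mem_insert, Finset.mem_singleton, not_or] at hk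
      apply hvan
      intro hmem
      rcases hsubt hmem with hh | hh
      · exact hk.1 hh
      · exact hk.2 hh
    rw [← Finset.sum_subset (Finset.subset_univ ({i, j} : Finset (Fin d))) hzero,
      Finset.sum_pair hijne, hterm i, hterm j,
      show mm - e i = x i by linarith, show mm - e j = x j by linarith] at hc
    exact hc
  have E1 := key h (fun _ => (1 : ℂ)) m rfl hmj hiT hij1 hs1
  have E2 := key h' cc m' rfl hmj' hiT' hij2 hs2
  have hlcj : (ℓ j).coeff (x j) ≠ 0 := HahnSeries.coeff_order_eq_zero.not.mpr (hl j)
  have hccne : cc j - cc i ≠ 0 := sub_ne_zero.mpr (cc_inj hijne.symm)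
  have hfinal : (cc j - cc i) * (ℓ j).coeff (x j) = 0 := by
    linear_combination E2 - cc i * E1
  rcases mul_eq_zero.mp hfinal with hh | hh
  · exact hccne hh
  · exact hlcj hh

/-- Coefficient of a sum of products of monomials with binomials. -/
lemma sum_coeff_two {U : Finset (Fin d)} {γ : Fin d → ℂ} {E : ℝ} (x e1 e2 : Fin d → ℝ)
    (z1 z2 : Fin d → ℂ) :
    (∑ j ∈ U, (single (x j) (γ j) : K) *
        (single (e1 j) (z1 j) - single (e2 j) (z2 j))).coeff E
      = ∑ j ∈ U, ((if E = x j + e1 j then γ j * z1 j else 0)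
          - (if E = x j + e2 j then γ j * z2 j else 0)) := by
  classical
  rw [coeff_sum]
  refine Finset.sum_congr rfl (fun j _ => ?_)
  rw [mul_sub, HahnSeries.single_mul_single, HahnSeries.single_mul_single,
    HahnSeries.coeff_sub, HahnSeries.coeff_single, HahnSeries.coeff_single]

set_option maxHeartbeats 1600000 in
/-- The lifting lemma: every good point is the coordinatewise order vector of an
all-coordinates-nonzero kernel element. -/
lemma exists_lift (hd : 3 ≤ d) {h h' x : Fin d → ℝ} (hg : GoodPt h h' x) :
    ∃ ℓ : Fin d → K, phi h h' ℓ = 0 ∧ (∀ j, ℓ j ≠ 0) ∧ ∀ j, (ℓ j).order = x j := by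
  classical
  obtain ⟨hm1, hm2, hU⟩ := hg
  obtain ⟨p, q, hpq, hp, hq, ⟨r1, hr1T, hr1p, hr1q⟩, ⟨r2, hr2T, hr2p, hr2q⟩⟩ :=
    selection hm1 hm2 hU
  set m := h p + x p with hm
  set m' := h' q + x q with hm'
  have hmle : ∀ j, m ≤ h j + x j := fun j => hp j
  have hm'le : ∀ j, m' ≤ h' j + x j := fun j => hq j
  -- the index set away from p and q, and the leading filters
  set U : Finset (Fin d) := (Finset.univ.erase p).erase q with hUdef
  have hqU : ∀ j ∈ U, j ≠ p ∧ j ≠ q := by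
    intro j hj
    rw [hUdef, Finset.mem_erase, Finset.mem_erase] at hj
    exact ⟨hj.2.1, hj.1⟩
  have hmemU : ∀ j, j ≠ p → j ≠ q → j ∈ U := by
    intro j h1 h2
    rw [hUdef, Finset.mem_erase, Finset.mem_erase]
    exact ⟨h2, h1, Finset.mem_univ j⟩
  set S1 : Finset (Fin d) := U.filter (fun j => h j + x j = m) with hS1
  set S2 : Finset (Fin d) := U.filter (fun j => h' j + x j = m') with hS2
  have hr1S1 : r1 ∈ S1 := by
    rw [hS1, Finset.mem_filter]
    exact ⟨hmemU r1 hr1p hr1q, le_antisymm (hr1T p) (hmle r1)⟩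
  have hr2S2 : r2 ∈ S2 := by
    rw [hS2, Finset.mem_filter]
    exact ⟨hmemU r2 hr2p hr2q, le_antisymm (hr2T q) (hm'le r2)⟩
  -- choose generic coefficients γ
  have hγex : ∃ γ : Fin d → ℂ, (∀ j, γ j ≠ 0) ∧ (∑ j ∈ S1, γ j) ≠ 0 ∧
      (∑ j ∈ S2, γ j * cc j) ≠ 0 ∧
      (∑ j ∈ S2, γ j * cc j) ≠ cc p * (∑ j ∈ S1, γ j) ∧
      (∑ j ∈ S2, γ j * cc j) ≠ cc q * (∑ j ∈ S1, γ j) := by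
    set A2 : ℂ := ∑ j ∈ S2.erase r2, cc j with hA2
    by_cases hr2S1 : r2 ∈ S1
    · set A1 : ℂ := ((S1.erase r2).card : ℂ) with hA1
      set bad : Finset ℂ := {0, -A1, -A2 / cc r2, (cc p * A1 - A2) / (cc r2 - cc p),
        (cc q * A1 - A2) / (cc r2 - cc q)} with hbad
      obtain ⟨z, hz⟩ := Infinite.exists_notMem_finset bad
      have hz0 : z ≠ 0 := fun hh => hz (by rw [hbad, hh]; simp)
      have hz1 : z ≠ -A1 := fun hh => hz (by rw [hbad, hh]; simp)
      have hz2 : z ≠ -A2 / cc r2 := fun hh => hz (by rw [hbad, hh]; simp)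
      have hz3 : z ≠ (cc p * A1 - A2) / (cc r2 - cc p) := fun hh => hz (by rw [hbad, hh]; simp)
      have hz4 : z ≠ (cc q * A1 - A2) / (cc r2 - cc q) := fun hh => hz (by rw [hbad, hh]; simp)
      set γ : Fin d → ℂ := fun j => if j = r2 then z else 1 with hγ
      have hSv1 : (∑ j ∈ S1, γ j) = z + A1 := by
        rw [← Finset.add_sum_erase S1 γ hr2S1]
        have h1 : γ r2 = z := by simp [hγ]
        have h2 : ∑ j ∈ S1.erase r2, γ j = A1 := by
          rw [hA1, show (∑ j ∈ S1.erase r2, γ j) = ∑ _j ∈ S1.erase r2, (1:ℂ) from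
            Finset.sum_congr rfl (fun j hj => by simp [hγ, Finset.ne_of_mem_erase hj])]
          simp
        rw [h1, h2]
      have hSv2 : (∑ j ∈ S2, γ j * cc j) = z * cc r2 + A2 := by
        rw [← Finset.add_sum_erase S2 (fun j => γ j * cc j) hr2S2]
        congr 1
        · simp [hγ]
        · rw [hA2]
          exact Finset.sum_congr rfl (fun j hj => by
            simp [hγ, (Finset.ne_of_mem_erase hj)])
      refine ⟨γ, ?_, ?_, ?_, ?_, ?_⟩
      · intro j; simp only [hγ]; split_ifs; exacts [hz0, one_ne_zero]
      · rw [hSv1]; intro hh; exact hz1 (by linear_combination hh)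
      · rw [hSv2]; intro hh
        refine hz2 ?_
        rw [eq_div_iff (cc_ne r2)]
        linear_combination hh
      · rw [hSv1, hSv2]; intro hh
        refine hz3 ?_
        rw [eq_div_iff (sub_ne_zero.mpr (cc_inj hr2p))]
        linear_combination hh
      · rw [hSv1, hSv2]; intro hh
        refine hz4 ?_
        rw [eq_div_iff (sub_ne_zero.mpr (cc_inj hr2q))]
        linear_combination hh
    · set A1 : ℂ := ((S1.card : ℕ) : ℂ) with hA1
      have hA1ne : A1 ≠ 0 := by
        rw [hA1]
        simp only [Nat.cast_ne_zero]
        exact Finset.card_ne_zero_of_mem hr1S1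
      set bad : Finset ℂ := {0, -A2 / cc r2, (cc p * A1 - A2) / cc r2,
        (cc q * A1 - A2) / cc r2} with hbad
      obtain ⟨z, hz⟩ := Infinite.exists_notMem_finset bad
      have hz0 : z ≠ 0 := fun hh => hz (by rw [hbad, hh]; simp)
      have hz2 : z ≠ -A2 / cc r2 := fun hh => hz (by rw [hbad, hh]; simp)
      have hz3 : z ≠ (cc p * A1 - A2) / cc r2 := fun hh => hz (by rw [hbad, hh]; simp)
      have hz4 : z ≠ (cc q * A1 - A2) / cc r2 := fun hh => hz (by rw [hbad, hh]; simp)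
      set γ : Fin d → ℂ := fun j => if j = r2 then z else 1 with hγ
      have hSv1 : (∑ j ∈ S1, γ j) = A1 := by
        rw [hA1, show (∑ j ∈ S1, γ j) = ∑ _j ∈ S1, (1:ℂ) from
          Finset.sum_congr rfl (fun j hj => by
            simp [hγ, show j ≠ r2 from fun hh => hr2S1 (hh ▸ hj)])]
        simp
      have hSv2 : (∑ j ∈ S2, γ j * cc j) = z * cc r2 + A2 := by
        rw [← Finset.add_sum_erase S2 (fun j => γ j * cc j) hr2S2]
        congr 1
        · simp [hγ]
        · rw [hA2]
          exact Finset.sum_congr rfl (fun j hj => by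
            simp [hγ, (Finset.ne_of_mem_erase hj)])
      refine ⟨γ, ?_, ?_, ?_, ?_, ?_⟩
      · intro j; simp only [hγ]; split_ifs; exacts [hz0, one_ne_zero]
      · rw [hSv1]; exact hA1ne
      · rw [hSv2]; intro hh
        refine hz2 ?_
        rw [eq_div_iff (cc_ne r2)]
        linear_combination hh
      · rw [hSv1, hSv2]; intro hh
        refine hz3 ?_
        rw [eq_div_iff (cc_ne r2)]
        linear_combination hh
      · rw [hSv1, hSv2]; intro hh
        refine hz4 ?_
        rw [eq_div_iff (cc_ne r2)]
        linear_combination hh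
  obtain ⟨γ, hγne, hc1, hc2, hc3, hc4⟩ := hγex
  -- basic exponent inequalities
  have hππ : h p + h' q ≤ h q + h' p := by
    have h1 := hmle q; have h2 := hm'le p
    rw [hm] at h1; rw [hm'] at h2
    linarith
  have hσ : m + h' q ≤ m' + h q := by
    have h1 := hmle q
    have h2 : m' = h' q + x q := hm'
    linarith
  have hσ' : h p + m' ≤ m + h' p := by
    have h2 := hm'le p
    have h1 : m = h p + x p := hm
    linarith
  -- the binomials
  set P : Fin d → Fin d → K := fun α β => av h α * bv h' β - av h β * bv h' α with hP
  have hPsingle : ∀ α β, P α β =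
      single (h α + h' β) (cc β) - single (h β + h' α) (cc α) := by
    intro α β
    simp [hP, av, bv, HahnSeries.single_mul_single]
  set D : K := P p q with hD
  have hDn : D ≠ 0 := by
    rw [hD, hPsingle]
    exact (single_sub_single (cc_ne q) (cc_ne p) (fun _ => cc_inj (Ne.symm hpq))).1
  have hDord : D.order = h p + h' q := by
    rw [hD, hPsingle,
      (single_sub_single (cc_ne q) (cc_ne p) (fun _ => cc_inj (Ne.symm hpq))).2]
    exact min_eq_left hππ
  set g : Fin d → K := fun j => single (x j) (γ j) with hgdef
  set Np : K := ∑ j ∈ U, g j * P j q with hNp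
  set Nq : K := ∑ j ∈ U, g j * P p j with hNq
  set ℓ : Fin d → K := fun k =>
    if k = p then -Np / D else if k = q then -Nq / D else g k with hℓ
  -- coefficients of Np
  have hNpcoeff : ∀ E, Np.coeff E = ∑ j ∈ U,
      ((if E = x j + (h j + h' q) then γ j * cc q else 0)
        - (if E = x j + (h q + h' j) then γ j * cc j else 0)) := by
    intro E
    rw [hNp, Finset.sum_congr rfl (fun j (_ : j ∈ U) => by
      rw [hPsingle] :
        ∀ j ∈ U, g j * P j q = single (x j) (γ j) *
          (single (h j + h' q) (cc q) - single (h q + h' j) (cc j)))]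
    exact sum_coeff_two x (fun j => h j + h' q) (fun j => h q + h' j) (fun _ => cc q) cc
  have hNpvan : ∀ E, E < h' q + m → Np.coeff E = 0 := by
    intro E hE
    rw [hNpcoeff]
    apply Finset.sum_eq_zero
    intro j _
    have h1 : ¬(E = x j + (h j + h' q)) := fun hcon => by
      have := hmle j; linarith
    have h2 : ¬(E = x j + (h q + h' j)) := fun hcon => by
      have := hm'le j; linarith
    rw [if_neg h1, if_neg h2, sub_zero]
  have hNpc : Np.coeff (h' q + m) = (∑ j ∈ S1, γ j) * cc q
      - (if m' + h q = h' q + m then (∑ j ∈ S2, γ j * cc j) else 0) := by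
    rw [hNpcoeff, Finset.sum_sub_distrib]
    congr 1
    · have hcong : ∀ j ∈ U, (if h' q + m = x j + (h j + h' q) then γ j * cc q else 0)
          = (if h j + x j = m then γ j * cc q else 0) := by
        intro j _
        refine if_congr ⟨fun hh => by linarith, fun hh => by linarith⟩ rfl rfl
      rw [Finset.sum_congr rfl hcong, ← Finset.sum_filter, ← hS1, ← Finset.sum_mul]
    · by_cases hσ0 : m' + h q = h' q + m
      · rw [if_pos hσ0]
        have hcong : ∀ j ∈ U, (if h' q + m = x j + (h q + h' j) then γ j * cc j else 0)
            = (if h' j + x j = m' then γ j * cc j else 0) := by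
          intro j _
          refine if_congr ⟨fun hh => by linarith, fun hh => by linarith⟩ rfl rfl
        rw [Finset.sum_congr rfl hcong, ← Finset.sum_filter, ← hS2]
      · rw [if_neg hσ0]
        apply Finset.sum_eq_zero
        intro j _
        refine if_neg (fun hcon => hσ0 ?_)
        have := hm'le j
        linarith
  have hNpne : Np.coeff (h' q + m) ≠ 0 := by
    rw [hNpc]
    by_cases hσ0 : m' + h q = h' q + m
    · rw [if_pos hσ0]
      intro hh
      exact hc4 (by linear_combination -hh)
    · rw [if_neg hσ0, sub_zero]
      exact mul_ne_zero hc1 (cc_ne q)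
  obtain ⟨hNpn0, hNpord⟩ := order_eq_of_coeff hNpne (fun e' he' => hNpvan e' he')
  -- coefficients of Nq
  have hNqcoeff : ∀ E, Nq.coeff E = ∑ j ∈ U,
      ((if E = x j + (h p + h' j) then γ j * cc j else 0)
        - (if E = x j + (h j + h' p) then γ j * cc p else 0)) := by
    intro E
    rw [hNq, Finset.sum_congr rfl (fun j (_ : j ∈ U) => by
      rw [hPsingle] :
        ∀ j ∈ U, g j * P p j = single (x j) (γ j) *
          (single (h p + h' j) (cc j) - single (h j + h' p) (cc p)))]
    exact sum_coeff_two x (fun j => h p + h' j) (fun j => h j + h' p) cc (fun _ => cc p)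
  have hNqvan : ∀ E, E < h p + m' → Nq.coeff E = 0 := by
    intro E hE
    rw [hNqcoeff]
    apply Finset.sum_eq_zero
    intro j _
    have h1 : ¬(E = x j + (h p + h' j)) := fun hcon => by
      have := hm'le j; linarith
    have h2 : ¬(E = x j + (h j + h' p)) := fun hcon => by
      have := hmle j; linarith
    rw [if_neg h1, if_neg h2, sub_zero]
  have hNqc : Nq.coeff (h p + m') = (∑ j ∈ S2, γ j * cc j)
      - (if m + h' p = h p + m' then (∑ j ∈ S1, γ j) * cc p else 0) := by
    rw [hNqcoeff, Finset.sum_sub_distrib]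
    congr 1
    · have hcong : ∀ j ∈ U, (if h p + m' = x j + (h p + h' j) then γ j * cc j else 0)
          = (if h' j + x j = m' then γ j * cc j else 0) := by
        intro j _
        refine if_congr ⟨fun hh => by linarith, fun hh => by linarith⟩ rfl rfl
      rw [Finset.sum_congr rfl hcong, ← Finset.sum_filter, ← hS2]
    · by_cases hσ0 : m + h' p = h p + m'
      · rw [if_pos hσ0]
        have hcong : ∀ j ∈ U, (if h p + m' = x j + (h j + h' p) then γ j * cc p else 0)
            = (if h j + x j = m then γ j * cc p else 0) := by
          intro j _
          refine if_congr ⟨fun hh => by linarith, fun hh => by linarith⟩ rfl rfl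
        rw [Finset.sum_congr rfl hcong, ← Finset.sum_filter, ← hS1, ← Finset.sum_mul]
      · rw [if_neg hσ0]
        apply Finset.sum_eq_zero
        intro j _
        refine if_neg (fun hcon => hσ0 ?_)
        have := hmle j
        linarith
  have hNqne : Nq.coeff (h p + m') ≠ 0 := by
    rw [hNqc]
    by_cases hσ0 : m + h' p = h p + m'
    · rw [if_pos hσ0]
      intro hh
      exact hc3 (by linear_combination hh)
    · rw [if_neg hσ0, sub_zero]
      exact hc2
  obtain ⟨hNqn0, hNqord⟩ := order_eq_of_coeff hNqne (fun e' he' => hNqvan e' he')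
  -- values of ℓ
  have hℓp : ℓ p = -Np / D := by simp [hℓ]
  have hℓq : ℓ q = -Nq / D := by simp [hℓ, Ne.symm hpq]
  have hℓU : ∀ j, j ≠ p → j ≠ q → ℓ j = g j := by
    intro j h1 h2; simp [hℓ, h1, h2]
  -- nonvanishing and orders
  have hne : ∀ j, ℓ j ≠ 0 := by
    intro j
    by_cases h1 : j = p
    · rw [h1, hℓp]
      exact div_ne_zero (neg_ne_zero.mpr hNpn0) hDn
    · by_cases h2 : j = q
      · rw [h2, hℓq]
        exact div_ne_zero (neg_ne_zero.mpr hNqn0) hDn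
      · rw [hℓU j h1 h2, hgdef]
        exact HahnSeries.single_ne_zero (hγne j)
  have hord : ∀ j, (ℓ j).order = x j := by
    intro j
    by_cases h1 : j = p
    · rw [h1, hℓp, order_div (neg_ne_zero.mpr hNpn0) hDn, HahnSeries.order_neg, hNpord,
        hDord, hm]
      ring
    · by_cases h2 : j = q
      · rw [h2, hℓq, order_div (neg_ne_zero.mpr hNqn0) hDn, HahnSeries.order_neg, hNqord,
          hDord, hm']
        ring
      · rw [hℓU j h1 h2, hgdef]
        exact HahnSeries.order_single (hγne j)
  -- kernel membership
  have hsplit : ∀ F : Fin d → K, ∑ j, F j = F p + F q + ∑ j ∈ U, F j := by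
    intro F
    rw [← Finset.add_sum_erase _ F (Finset.mem_univ p),
      ← Finset.add_sum_erase _ F (Finset.mem_erase.mpr ⟨Ne.symm hpq, Finset.mem_univ q⟩),
      ← hUdef, add_assoc]
  have key : ∀ A : Fin d → K, (∀ j, A j * D = A p * P j q + A q * P p j) →
      ∑ j, A j * ℓ j = 0 := by
    intro A hA
    have hDsum : D * (∑ j, A j * ℓ j) = 0 := by
      rw [Finset.mul_sum, hsplit (fun j => D * (A j * ℓ j))]
      have hcanp : Np / D * D = Np := div_mul_cancel₀ Np hDn
      have hcanq : Nq / D * D = Nq := div_mul_cancel₀ Nq hDn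
      have e1 : D * (A p * ℓ p) = -(A p * Np) := by
        rw [hℓp]
        calc D * (A p * (-Np / D)) = -(A p * (Np / D * D)) := by ring
          _ = -(A p * Np) := by rw [hcanp]
      have e2 : D * (A q * ℓ q) = -(A q * Nq) := by
        rw [hℓq]
        calc D * (A q * (-Nq / D)) = -(A q * (Nq / D * D)) := by ring
          _ = -(A q * Nq) := by rw [hcanq]
      have e3 : ∀ j ∈ U, D * (A j * ℓ j)
          = A p * (g j * P j q) + A q * (g j * P p j) := by
        intro j hj
        obtain ⟨hjp, hjq⟩ := hqU j hj
        rw [hℓU j hjp hjq]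
        calc D * (A j * g j) = g j * (A j * D) := by ring
          _ = g j * (A p * P j q + A q * P p j) := by rw [hA j]
          _ = A p * (g j * P j q) + A q * (g j * P p j) := by ring
      rw [e1, e2, Finset.sum_congr rfl e3, Finset.sum_add_distrib, ← Finset.mul_sum,
        ← Finset.mul_sum, ← hNp, ← hNq]
      ring
    exact (mul_eq_zero.mp hDsum).resolve_left hDn
  have hker : phi h h' ℓ = 0 := by
    have idav : ∀ j, av h j * D = av h p * P j q + av h q * P p j := by
      intro j; simp only [hD, hP]; ring
    have idbv : ∀ j, bv h' j * D = bv h' p * P j q + bv h' q * P p j := by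
      intro j; simp only [hD, hP]; ring
    have h1 := key (av h) idav
    have h2 := key (bv h') idbv
    show (∑ j, av h j * ℓ j, ∑ j, bv h' j * ℓ j) = (0, 0)
    rw [h1, h2]
  exact ⟨ℓ, hker, hne, hord⟩

end LiftAux

/-- For `d ≥ 3` and two tropical hyperplanes `H(h)`, `H(h')` in `ℝ^d`, there is a
`(d-2)`-dimensional `K`-linear subspace `L ⊆ K^d` whose coordinatewise valuation image
(over vectors of `L` with all coordinates nonzero) equals the stable intersection of
`H(h)` and `H(h')`. -/
theorem stable_intersection_has_lift (d : ℕ) (hd : 3 ≤ d) (h h' : Fin d → ℝ) :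
    ∃ L : Submodule K (Fin d → K), Module.finrank K L = d - 2 ∧
      {x : Fin d → ℝ | ∃ ℓ ∈ L, (∀ j, ℓ j ≠ 0) ∧ ∀ j, (ℓ j).order = x j} =
      {w : Fin d → ℝ | StableMem h h' w} := by
  have hd0 : 0 < d := by omega
  refine ⟨LinearMap.ker (LiftAux.phi h h'), LiftAux.finrank_ker hd h h', ?_⟩
  ext x
  simp only [Set.mem_setOf_eq]
  constructor
  · rintro ⟨ℓ, hℓker, hne, hord⟩
    have hgood := LiftAux.good_of_mem hd (LinearMap.mem_ker.mp hℓker) hne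
    have hx : (fun j => (ℓ j).order) = x := funext hord
    rw [hx] at hgood
    exact TropAux.stable_of_good hd0 hgood
  · intro hs
    obtain ⟨ℓ, hker, hne, hord⟩ := LiftAux.exists_lift hd (TropAux.good_of_stable hd0 hs)
    exact ⟨ℓ, LinearMap.mem_ker.mpr hker, hne, hord⟩
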